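/- For every real number n ≥ 1, ∑_{l=1}^{∞} e^{4π√(nl) − √3·π·l} ≤ 3·√n · e^{4πn/√3}. -/

import Mathlib

open Real

lemma stmt3_numeric (r s q p : ℝ) (hr : 1 ≤ r) (hs2 : s^2 = 3) (hs : 0 < s)
    (hq0 : 0 ≤ q) (hq2 : q^2 * s = 1) (hp : 3.14 ≤ p) :
    1 + (1/(s*p) + 2*(2*r/s)*q) ≤ 3*r := by
  have hs_lb : (1.732:ℝ) ≤ s := by nlinarith
  have hq_ub : q ≤ 0.76 := by nlinarith
  have h1b : 1/(s*p) ≤ 0.1839 := by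
    rw [div_le_iff₀ (by positivity)]
    nlinarith [mul_nonneg (by linarith : (0:ℝ) ≤ s - 1.732) (by linarith : (0:ℝ) ≤ p - 3.14)]
  have h2c : 2*(2*r/s)*q ≤ 1.7553 * r := by
    rw [show 2*(2*r/s)*q = (4*r*q)/s by ring, div_le_iff₀ hs]
    nlinarith [mul_nonneg (by linarith : (0:ℝ) ≤ r) (by linarith : (0:ℝ) ≤ 0.76 - q),
      mul_nonneg (by linarith : (0:ℝ) ≤ r) (by linarith : (0:ℝ) ≤ s - 1.732)]
  linarith

theorem stmt3 (n : ℝ) (hn : 1 ≤ n) :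
    Summable (fun l : ℕ =>
      Real.exp (4 * π * Real.sqrt (n * (l + 1)) - Real.sqrt 3 * π * (l + 1))) ∧
    ∑' l : ℕ, Real.exp (4 * π * Real.sqrt (n * (l + 1)) - Real.sqrt 3 * π * (l + 1)) ≤
      3 * Real.sqrt n * Real.exp (4 * π * n / Real.sqrt 3) := by
  have hπ : (0:ℝ) < π := Real.pi_pos
  have hn0 : (0:ℝ) ≤ n := le_trans zero_le_one hn
  have hs3 : (0:ℝ) < Real.sqrt 3 := Real.sqrt_pos.2 (by norm_num)
  have h4 : Real.sqrt 3 ^ 2 = 3 := Real.sq_sqrt (by norm_num)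
  set c : ℝ := 2 * Real.sqrt n / Real.sqrt 3 with hc_def
  have hc : 0 < c := by positivity
  have hrn : (1:ℝ) ≤ Real.sqrt n := Real.one_le_sqrt.2 hn
  have hcsq : c ^ 2 = 4 * n / 3 := by
    rw [hc_def, div_pow, mul_pow, Real.sq_sqrt hn0, h4]; norm_num
  have hcsq1 : (1:ℝ) ≤ c ^ 2 := by rw [hcsq]; linarith
  set b : ℝ := Real.sqrt 3 * π with hb_def
  have hb : 0 < b := by positivity
  set G : ℝ → ℝ := fun x => Real.exp (-(b * (Real.sqrt x - c)^2)) with hG_def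
  -- key identity
  have key : ∀ x : ℝ, 0 ≤ x →
      Real.exp (4 * π * Real.sqrt (n * x) - Real.sqrt 3 * π * x)
        = Real.exp (4 * π * n / Real.sqrt 3) * G x := by
    intro x hx
    rw [hG_def, ← Real.exp_add]
    congr 1
    have h1 : Real.sqrt (n * x) = Real.sqrt n * Real.sqrt x := Real.sqrt_mul hn0 x
    have h2 : Real.sqrt x ^ 2 = x := Real.sq_sqrt hx
    have h3 : Real.sqrt n ^ 2 = n := Real.sq_sqrt hn0
    have h5 : Real.sqrt 3 ≠ 0 := ne_of_gt hs3
    rw [h1, hb_def, hc_def]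
    have h6 : Real.sqrt 3 * (Real.sqrt 3)⁻¹ = 1 := mul_inv_cancel₀ h5
    linear_combination (-4*π*Real.sqrt n*Real.sqrt x + 4*π*n*(Real.sqrt 3)⁻¹)*h6
      + Real.sqrt 3*π*h2 + 4*π*(Real.sqrt 3)⁻¹^2*Real.sqrt 3*h3
  have hGcont : Continuous G := by rw [hG_def]; fun_prop
  have hGint : ∀ p q : ℝ, IntervalIntegrable G MeasureTheory.volume p q :=
    fun p q => hGcont.intervalIntegrable p q
  have hG0 : ∀ x, 0 ≤ G x := fun x => (Real.exp_pos _).le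
  have hG1 : ∀ x, G x ≤ 1 := by
    intro x
    rw [hG_def]
    exact Real.exp_le_one_iff.2 (neg_nonpos.2 (by positivity))
  have hmono : ∀ x y : ℝ, 0 ≤ x → x ≤ y → y ≤ c ^ 2 → G x ≤ G y := by
    intro x y hx hxy hyc
    rw [hG_def]
    apply Real.exp_le_exp.2
    apply neg_le_neg
    apply mul_le_mul_of_nonneg_left _ hb.le
    have h1 : Real.sqrt x ≤ Real.sqrt y := Real.sqrt_le_sqrt hxy
    have h2 : Real.sqrt y ≤ c := by
      calc Real.sqrt y ≤ Real.sqrt (c ^ 2) := Real.sqrt_le_sqrt hyc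
        _ = c := Real.sqrt_sq hc.le
    nlinarith [Real.sqrt_nonneg x]
  have hanti : ∀ x y : ℝ, c ^ 2 ≤ x → x ≤ y → G y ≤ G x := by
    intro x y hcx hxy
    rw [hG_def]
    apply Real.exp_le_exp.2
    apply neg_le_neg
    apply mul_le_mul_of_nonneg_left _ hb.le
    have h1 : Real.sqrt x ≤ Real.sqrt y := Real.sqrt_le_sqrt hxy
    have h2 : c ≤ Real.sqrt x := by
      calc c = Real.sqrt (c ^ 2) := (Real.sqrt_sq hc.le).symm
        _ ≤ Real.sqrt x := Real.sqrt_le_sqrt hcx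
    nlinarith
  have hstep_up : ∀ m : ℝ, 0 ≤ m → m + 1 ≤ c ^ 2 →
      G m ≤ ∫ x in m..(m+1), G x := by
    intro m hm hmc
    have : G m = ∫ _x in m..(m+1), G m := by
      rw [intervalIntegral.integral_const]; simp
    rw [this]
    apply intervalIntegral.integral_mono_on (by linarith)
      (intervalIntegrable_const) (hGint _ _)
    intro x hx
    exact hmono m x hm hx.1 (by linarith [hx.2])
  have hstep_down : ∀ m : ℝ, c ^ 2 ≤ m → G (m+1) ≤ ∫ x in m..(m+1), G x := by
    intro m hmc
    have : G (m+1) = ∫ _x in m..(m+1), G (m+1) := by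
      rw [intervalIntegral.integral_const]; simp
    rw [this]
    apply intervalIntegral.integral_mono_on (by linarith)
      (intervalIntegrable_const) (hGint _ _)
    intro x hx
    exact hanti x (m+1) (le_trans hmc hx.1) hx.2
  set N₀ : ℕ := Nat.floor (c ^ 2) with hN_def
  have hN0le : (N₀ : ℝ) ≤ c ^ 2 := Nat.floor_le (by positivity)
  have hN0lt : c ^ 2 < (N₀ : ℝ) + 1 := Nat.lt_floor_add_one _
  have hN1 : 1 ≤ N₀ := Nat.le_floor (by exact_mod_cast hcsq1)
  have hpeak : G N₀ + G ((N₀ : ℝ) + 1) ≤ 1 + ∫ x in (N₀:ℝ)..((N₀:ℝ)+1), G x := by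
    set t : ℝ := (N₀ : ℝ) with ht_def
    have ht0 : 0 ≤ t := Nat.cast_nonneg _
    have hminle : min (G t) (G (t+1)) ≤ ∫ x in t..(t+1), G x := by
      have heq : min (G t) (G (t+1)) = ∫ _x in t..(t+1), min (G t) (G (t+1)) := by
        rw [intervalIntegral.integral_const]; simp
      rw [heq]
      apply intervalIntegral.integral_mono_on (by linarith)
        (intervalIntegrable_const) (hGint _ _)
      intro x hx
      rcases le_or_gt x (c ^ 2) with h | h
      · exact le_trans (min_le_left _ _) (hmono t x ht0 hx.1 h)
      · exact le_trans (min_le_right _ _) (hanti x (t+1) h.le hx.2)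
    calc G t + G (t+1) = max (G t) (G (t+1)) + min (G t) (G (t+1)) := (max_add_min _ _).symm
      _ ≤ 1 + ∫ x in t..(t+1), G x := add_le_add (max_le (hG1 _) (hG1 _)) hminle
  have hmain : ∀ K : ℕ, N₀ + 1 ≤ K →
      ∑ l ∈ Finset.range K, G ((l : ℝ) + 1) ≤ 1 + ∫ x in (0:ℝ)..(K:ℝ), G x := by
    intro K hK
    induction K, hK using Nat.le_induction with
    | base =>
      obtain ⟨M, hM⟩ : ∃ M, N₀ = M + 1 := ⟨N₀ - 1, (Nat.succ_pred_eq_of_pos hN1).symm⟩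
      rw [hM]
      rw [Finset.sum_range_succ, Finset.sum_range_succ]
      have hsum1 : ∑ l ∈ Finset.range M, G ((l : ℝ) + 1)
          ≤ ∑ l ∈ Finset.range M, ∫ x in ((l:ℝ)+1)..((l:ℝ)+1+1), G x := by
        apply Finset.sum_le_sum
        intro l hl
        apply hstep_up ((l:ℝ)+1) (by positivity)
        have hlM : (l : ℝ) + 1 ≤ (M : ℝ) := by
          exact_mod_cast Nat.succ_le_of_lt (Finset.mem_range.1 hl)
        have : ((M : ℝ) + 1) ≤ c ^ 2 := by
          calc ((M : ℝ) + 1) = ((N₀ : ℝ)) := by rw [hM]; push_cast; ring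
            _ ≤ c ^ 2 := hN0le
        linarith
      have htel : ∑ l ∈ Finset.range M, ∫ x in ((l:ℝ)+1)..((l:ℝ)+1+1), G x
          = ∫ x in (1:ℝ)..((M:ℝ)+1), G x := by
        have h := intervalIntegral.sum_integral_adjacent_intervals
          (a := fun k : ℕ => (k:ℝ)+1) (μ := MeasureTheory.volume) (n := M)
          (fun k _ => hGint _ _)
        push_cast at h
        simpa using h
      have hpk : G ((M:ℝ)+1) + G ((M:ℝ)+1+1)
          ≤ 1 + ∫ x in ((M:ℝ)+1)..((M:ℝ)+1+1), G x := by
        have : (N₀ : ℝ) = (M : ℝ) + 1 := by rw [hM]; push_cast; ring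
        rw [this] at hpeak
        convert hpeak using 3
      have hsplit : ∫ x in (0:ℝ)..(((M:ℕ):ℝ)+1+1), G x
          = (∫ x in (0:ℝ)..(1:ℝ), G x) + (∫ x in (1:ℝ)..((M:ℝ)+1), G x)
            + ∫ x in ((M:ℝ)+1)..((M:ℝ)+1+1), G x := by
        rw [intervalIntegral.integral_add_adjacent_intervals (hGint _ _) (hGint _ _),
          intervalIntegral.integral_add_adjacent_intervals (hGint _ _) (hGint _ _)]
      have h01 : 0 ≤ ∫ x in (0:ℝ)..(1:ℝ), G x :=
        intervalIntegral.integral_nonneg (by norm_num) (fun x _ => hG0 x)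
      have hcast : ((M + 1 + 1 : ℕ) : ℝ) = (M:ℝ) + 1 + 1 := by push_cast; ring
      rw [hcast, hsplit]
      push_cast
      linarith
    | succ K hK ih =>
      rw [Finset.sum_range_succ]
      have hlast : G ((K:ℝ) + 1) ≤ ∫ x in (K:ℝ)..((K:ℝ)+1), G x := by
        apply hstep_down
        have : ((N₀ : ℝ) + 1) ≤ (K : ℝ) := by exact_mod_cast hK
        linarith
      have hsplit : ∫ x in (0:ℝ)..((K:ℝ)+1), G x
          = (∫ x in (0:ℝ)..(K:ℝ), G x) + ∫ x in (K:ℝ)..((K:ℝ)+1), G x :=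
        (intervalIntegral.integral_add_adjacent_intervals (hGint _ _) (hGint _ _)).symm
      have hcast : ((K + 1 : ℕ) : ℝ) = (K:ℝ) + 1 := by push_cast; ring
      rw [hcast, hsplit]
      linarith
  have hIbound : ∀ K : ℕ, ∫ x in (0:ℝ)..(K:ℝ), G x
      ≤ 1/b + 2*c*Real.sqrt (1/Real.sqrt 3) := by
    intro K
    set R : ℝ := Real.sqrt (K:ℝ) with hR_def
    have hR0 : 0 ≤ R := Real.sqrt_nonneg _
    have hR2 : R^2 = (K:ℝ) := Real.sq_sqrt (Nat.cast_nonneg _)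
    have hcov : ∫ x in (0:ℝ)..(K:ℝ), G x = ∫ u in (0:ℝ)..R, (2*u) • G (u^2) := by
      have h := intervalIntegral.integral_comp_smul_deriv
        (f := fun u : ℝ => u^2) (f' := fun u : ℝ => 2*u) (g := G) (a := 0) (b := R)
        (fun x _ => by simpa using hasDerivAt_pow 2 x)
        (by fun_prop) hGcont
      have h2 : (∫ u in (0:ℝ)..R, (2*u) • G (u^2)) = ∫ x in ((0:ℝ)^2)..(R^2), G x := by
        simpa using h
      rw [h2, hR2]
      norm_num
    have hcongr : (∫ u in (0:ℝ)..R, (2*u) • G (u^2))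
        = ∫ u in (0:ℝ)..R,
            (2*(u-c)*Real.exp (-(b*(u-c)^2)) + 2*c*Real.exp (-(b*(u-c)^2))) := by
      apply intervalIntegral.integral_congr
      intro u hu
      rw [Set.uIcc_of_le hR0] at hu
      have hu0 : 0 ≤ u := hu.1
      have hsq : Real.sqrt (u^2) = u := Real.sqrt_sq hu0
      simp only [hG_def, smul_eq_mul, hsq]
      ring
    have hint1 : IntervalIntegrable (fun u : ℝ => 2*(u-c)*Real.exp (-(b*(u-c)^2)))
        MeasureTheory.volume 0 R := (by fun_prop : Continuous _).intervalIntegrable 0 R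
    have hint2 : IntervalIntegrable (fun u : ℝ => 2*c*Real.exp (-(b*(u-c)^2)))
        MeasureTheory.volume 0 R := (by fun_prop : Continuous _).intervalIntegrable 0 R
    have hadd : (∫ u in (0:ℝ)..R,
            (2*(u-c)*Real.exp (-(b*(u-c)^2)) + 2*c*Real.exp (-(b*(u-c)^2))))
        = (∫ u in (0:ℝ)..R, 2*(u-c)*Real.exp (-(b*(u-c)^2)))
          + ∫ u in (0:ℝ)..R, 2*c*Real.exp (-(b*(u-c)^2)) :=
      intervalIntegral.integral_add hint1 hint2
    have hpart1 : (∫ u in (0:ℝ)..R, 2*(u-c)*Real.exp (-(b*(u-c)^2))) ≤ 1/b := by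
      have hder : ∀ x ∈ Set.uIcc (0:ℝ) R,
          HasDerivAt (fun u : ℝ => -(Real.exp (-(b*(u-c)^2)))/b)
            (2*(x-c)*Real.exp (-(b*(x-c)^2))) x := by
        intro x _
        have h1 : HasDerivAt (fun u : ℝ => -(b*(u-c)^2)) (-(b*(2*(x-c)))) x := by
          have h0 : HasDerivAt (fun u : ℝ => (u-c)^2) (2*(x-c)) x := by
            exact (((hasDerivAt_id x).sub_const c).pow 2).congr_deriv (by simp)
          exact (h0.const_mul b).neg
        have h3 := (h1.exp.div_const b).neg
        have heq : -(Real.exp (-(b*(x-c)^2)) * -(b*(2*(x-c))) / b)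
            = 2*(x-c)*Real.exp (-(b*(x-c)^2)) := by
          field_simp
        rw [heq] at h3
        have h3' : HasDerivAt (fun u : ℝ => -(Real.exp (-(b*(u-c)^2))/b))
            (2*(x-c)*Real.exp (-(b*(x-c)^2))) x := h3
        simpa [neg_div] using h3'
      have heval := intervalIntegral.integral_eq_sub_of_hasDerivAt hder hint1
      have e1 : Real.exp (-(b*((0:ℝ)-c)^2)) ≤ 1 :=
        Real.exp_le_one_iff.2 (neg_nonpos.2 (by positivity))
      have e2 : 0 < Real.exp (-(b*(R-c)^2)) := Real.exp_pos _
      have heq2 : -(Real.exp (-(b*(R-c)^2)))/b - -(Real.exp (-(b*((0:ℝ)-c)^2)))/b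
          = (Real.exp (-(b*((0:ℝ)-c)^2)) - Real.exp (-(b*(R-c)^2)))/b := by ring
      rw [heval, heq2]
      gcongr
      linarith
    have hpart2 : (∫ u in (0:ℝ)..R, 2*c*Real.exp (-(b*(u-c)^2)))
        ≤ 2*c*Real.sqrt (1/Real.sqrt 3) := by
      rw [intervalIntegral.integral_const_mul]
      apply mul_le_mul_of_nonneg_left _ (by positivity)
      have hInt : MeasureTheory.Integrable (fun u : ℝ => Real.exp (-(b*(u-c)^2))) := by
        have h := integrable_exp_neg_mul_sq hb
        have h2 := h.comp_sub_right c
        simpa [neg_mul] using h2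
      calc (∫ u in (0:ℝ)..R, Real.exp (-(b*(u-c)^2)))
          = ∫ u in Set.Ioc (0:ℝ) R, Real.exp (-(b*(u-c)^2)) :=
            intervalIntegral.integral_of_le hR0
        _ ≤ ∫ u : ℝ, Real.exp (-(b*(u-c)^2)) :=
            MeasureTheory.setIntegral_le_integral hInt
              (Filter.Eventually.of_forall fun x => (Real.exp_pos _).le)
        _ = ∫ u : ℝ, Real.exp (-(b*u^2)) :=
            MeasureTheory.integral_sub_right_eq_self
              (fun u : ℝ => Real.exp (-(b*u^2))) c
        _ = Real.sqrt (π / b) := by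
            simpa [neg_mul] using integral_gaussian b
        _ = Real.sqrt (1/Real.sqrt 3) := by
            rw [hb_def]
            congr 1
            field_simp
    rw [hcov, hcongr, hadd]
    linarith
  -- assembly
  set C : ℝ := 1 + (1/b + 2*c*Real.sqrt (1/Real.sqrt 3)) with hC_def
  have hCsum : ∀ K : ℕ, ∑ l ∈ Finset.range K, G ((l:ℝ)+1) ≤ C := by
    intro K
    have hsub : ∑ l ∈ Finset.range K, G ((l:ℝ)+1)
        ≤ ∑ l ∈ Finset.range (max K (N₀+1)), G ((l:ℝ)+1) :=
      Finset.sum_le_sum_of_subset_of_nonneg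
        (Finset.range_subset_range.2 (le_max_left _ _)) (fun i _ _ => hG0 _)
    calc ∑ l ∈ Finset.range K, G ((l:ℝ)+1)
        ≤ ∑ l ∈ Finset.range (max K (N₀+1)), G ((l:ℝ)+1) := hsub
      _ ≤ 1 + ∫ x in (0:ℝ)..((max K (N₀+1) : ℕ):ℝ), G x := hmain _ (le_max_right _ _)
      _ ≤ C := by rw [hC_def]; linarith [hIbound (max K (N₀+1))]
  have hf_eq : ∀ l : ℕ,
      Real.exp (4 * π * Real.sqrt (n * (l + 1)) - Real.sqrt 3 * π * (l + 1))
        = Real.exp (4 * π * n / Real.sqrt 3) * G ((l:ℝ)+1) :=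
    fun l => key ((l:ℝ)+1) (by positivity)
  set E : ℝ := Real.exp (4 * π * n / Real.sqrt 3) with hE_def
  have hE : 0 < E := Real.exp_pos _
  have hpartial : ∀ K : ℕ, ∑ l ∈ Finset.range K,
      Real.exp (4 * π * Real.sqrt (n * (l + 1)) - Real.sqrt 3 * π * (l + 1)) ≤ E * C := by
    intro K
    calc ∑ l ∈ Finset.range K,
        Real.exp (4 * π * Real.sqrt (n * (l + 1)) - Real.sqrt 3 * π * (l + 1))
        = ∑ l ∈ Finset.range K, E * G ((l:ℝ)+1) :=
          Finset.sum_congr rfl (fun l _ => hf_eq l)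
      _ = E * ∑ l ∈ Finset.range K, G ((l:ℝ)+1) := by rw [Finset.mul_sum]
      _ ≤ E * C := mul_le_mul_of_nonneg_left (hCsum K) hE.le
  have hsummable := summable_of_sum_range_le (fun l => (Real.exp_pos _).le) hpartial
  refine ⟨hsummable, ?_⟩
  have htsum := Real.tsum_le_of_sum_range_le (fun l => (Real.exp_pos _).le) hpartial
  refine le_trans htsum ?_
  have hCle : C ≤ 3 * Real.sqrt n := by
    have hq2' : (Real.sqrt (1/Real.sqrt 3))^2 * Real.sqrt 3 = 1 := by
      rw [Real.sq_sqrt (by positivity)]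
      field_simp
    have hπ_lb : (3.14:ℝ) ≤ π := by linarith [Real.pi_gt_d6]
    have h := stmt3_numeric (Real.sqrt n) (Real.sqrt 3) (Real.sqrt (1/Real.sqrt 3)) π
      hrn h4 hs3 (Real.sqrt_nonneg _) hq2' hπ_lb
    rw [hC_def, hb_def, hc_def]
    linarith
  calc E * C ≤ E * (3 * Real.sqrt n) := mul_le_mul_of_nonneg_left hCle hE.le
    _ = 3 * Real.sqrt n * E := by ring
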